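/- If g(t) = (t−t₀)^{2k} log|t−t₀| satisfies g(t)² = α(t) g(t) + β(t) on a punctured neighborhood of t₀ with α, β real analytic at t₀, then a contradiction follows; i.e., no such analytic α, β exist. -/

import Mathlib

open Filter Real Topology

/-- Factor theorem for analytic functions vanishing at a point. -/
lemma tps_factor_out {f : ℝ → ℝ} {t₀ : ℝ} (hf : AnalyticAt ℝ f t₀) (h0 : f t₀ = 0) :
    ∃ g : ℝ → ℝ, AnalyticAt ℝ g t₀ ∧ ∀ᶠ t in 𝓝 t₀, f t = (t - t₀) * g t := by
  by_cases h : ∀ᶠ t in 𝓝 t₀, f t = 0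
  · exact ⟨0, analyticAt_const, by filter_upwards [h] with t ht; simp [ht]⟩
  · obtain ⟨n, g, hg, hgne, heq⟩ := hf.exists_eventuallyEq_pow_smul_nonzero_iff.mpr h
    have hn : n ≠ 0 := by
      rintro rfl
      have := heq.self_of_nhds
      simp only [pow_zero, one_smul] at this
      rw [h0] at this
      exact hgne this.symm
    obtain ⟨m, rfl⟩ := Nat.exists_eq_succ_of_ne_zero hn
    refine ⟨fun t => (t - t₀) ^ m * g t,
      ((analyticAt_id.sub analyticAt_const).pow m).mul hg, ?_⟩
    filter_upwards [heq] with t ht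
    rw [ht, smul_eq_mul, pow_succ]
    ring

lemma tps_sub_tendsto (t₀ : ℝ) :
    Tendsto (fun t : ℝ => t - t₀) (𝓝[≠] t₀) (𝓝[≠] 0) := by
  apply tendsto_nhdsWithin_of_tendsto_nhds_of_eventually_within
  · simpa using ((continuous_sub_right t₀).tendsto' t₀ 0 (by simp)).mono_left
      (nhdsWithin_le_nhds (s := {t₀}ᶜ))
  · filter_upwards [self_mem_nhdsWithin] with t ht
    simpa [sub_eq_zero] using ht

/-- `log |t - t₀| → -∞` as `t → t₀`, `t ≠ t₀`. -/
lemma tps_tendsto_log_atBot (t₀ : ℝ) :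
    Tendsto (fun t => Real.log |t - t₀|) (𝓝[≠] t₀) atBot := by
  have := Real.tendsto_log_nhdsNE_zero.comp (tps_sub_tendsto t₀)
  refine this.congr fun t => ?_
  simp only [Function.comp_apply, Real.log_abs]

/-- `(log |t - t₀|)⁻¹ → 0` as `t → t₀`, `t ≠ t₀`. -/
lemma tps_inv_log (t₀ : ℝ) :
    Tendsto (fun t => (Real.log |t - t₀|)⁻¹) (𝓝[≠] t₀) (𝓝 0) := by
  have h1 : Tendsto (fun t => -Real.log |t - t₀|) (𝓝[≠] t₀) atTop :=
    tendsto_neg_atBot_atTop.comp (tps_tendsto_log_atBot t₀)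
  have h2 := h1.inv_tendsto_atTop
  have h3 : Tendsto (fun t => -((fun t => -Real.log |t - t₀|)⁻¹ t)) (𝓝[≠] t₀) (𝓝 (-0)) :=
    h2.neg
  rw [neg_zero] at h3
  refine h3.congr fun t => ?_
  simp only [Pi.inv_apply, inv_neg, neg_neg]

/-- `y * (log y)^j → 0` as `y → 0⁺`. -/
lemma tps_base_lim (j : ℕ) :
    Tendsto (fun y : ℝ => y * Real.log y ^ j) (𝓝[>] 0) (𝓝 0) := by
  rcases Nat.eq_zero_or_pos j with rfl | hj
  · have : Tendsto (fun y : ℝ => y) (𝓝[>] (0:ℝ)) (𝓝 0) := tendsto_id'.mpr nhdsWithin_le_nhds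
    simpa using this
  have hr : (0:ℝ) < 1 / j := by positivity
  have h := tendsto_log_mul_rpow_nhdsGT_zero hr
  have h2 : Tendsto (fun y : ℝ => (Real.log y * y ^ (1 / (j:ℝ))) ^ j) (𝓝[>] 0) (𝓝 0) := by
    have hc := (continuous_pow j).tendsto (0:ℝ)
    rw [show ((0:ℝ) ^ j) = 0 by simp [hj.ne']] at hc
    exact hc.comp h
  refine h2.congr' ?_
  filter_upwards [self_mem_nhdsWithin] with y hy
  have hy' : (0:ℝ) < y := hy
  rw [mul_pow, ← Real.rpow_natCast (y ^ (1 / (j:ℝ))) j, ← Real.rpow_mul hy'.le,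
    one_div, inv_mul_cancel₀ (by exact_mod_cast hj.ne'), Real.rpow_one]
  ring

/-- `(t - t₀)^n * (log|t-t₀|)^j → 0` for `n ≥ 1`. -/
lemma tps_main_lim (t₀ : ℝ) (j n : ℕ) (hn : 1 ≤ n) :
    Tendsto (fun t => (t - t₀) ^ n * Real.log |t - t₀| ^ j) (𝓝[≠] t₀) (𝓝 0) := by
  have habs : Tendsto (fun t => |t - t₀|) (𝓝[≠] t₀) (𝓝[>] 0) :=
    tendsto_abs_nhdsNE_zero.comp (tps_sub_tendsto t₀)
  have hg : Tendsto (fun t => |t - t₀| * abs (Real.log |t - t₀|) ^ j) (𝓝[≠] t₀) (𝓝 0) := by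
    have hb : Tendsto (fun y : ℝ => |y * Real.log y ^ j|) (𝓝[>] 0) (𝓝 0) := by
      have hc := (continuous_abs.tendsto (0:ℝ)).comp (tps_base_lim j)
      simpa only [Function.comp_def, abs_zero] using hc
    have hcomp := hb.comp habs
    refine hcomp.congr fun t => ?_
    simp only [Function.comp_apply, abs_mul, abs_abs, abs_pow]
  apply squeeze_zero_norm' ?_ hg
  have hsmall : ∀ᶠ t in 𝓝[≠] t₀, |t - t₀| ≤ 1 := by
    have h0 : Tendsto (fun t => |t - t₀|) (𝓝[≠] t₀) (𝓝 0) := habs.mono_right nhdsWithin_le_nhds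
    filter_upwards [h0.eventually (ge_mem_nhds (by norm_num : (0:ℝ) < 1))] with t ht
    exact ht
  filter_upwards [hsmall] with t ht
  rw [Real.norm_eq_abs, abs_mul, abs_pow, abs_pow]
  have hb : |t - t₀| ^ n ≤ |t - t₀| := by
    calc |t - t₀| ^ n ≤ |t - t₀| ^ 1 := pow_le_pow_of_le_one (abs_nonneg _) ht hn
    _ = |t - t₀| := pow_one _
  exact mul_le_mul_of_nonneg_right hb (by positivity)

/-- No analytic `a, c` satisfy `(t-t₀)^n (log|t-t₀|)² = a(t) log|t-t₀| + c(t)` near `t₀`. -/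
lemma tps_lemB (t₀ : ℝ) : ∀ n : ℕ, ∀ a c : ℝ → ℝ, AnalyticAt ℝ a t₀ → AnalyticAt ℝ c t₀ →
    (∀ᶠ t in 𝓝[≠] t₀, (t - t₀) ^ n * Real.log |t - t₀| ^ 2
      = a t * Real.log |t - t₀| + c t) → False := by
  intro n
  induction n with
  | zero =>
    intro a c ha hc hev
    have hL : Tendsto (fun t => Real.log |t - t₀|) (𝓝[≠] t₀) atBot := tps_tendsto_log_atBot t₀
    have hLne : ∀ᶠ t in 𝓝[≠] t₀, Real.log |t - t₀| < -1 := hL.eventually (eventually_lt_atBot (-1))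
    have hinv := tps_inv_log t₀
    have hca : Tendsto a (𝓝[≠] t₀) (𝓝 (a t₀)) :=
      ha.continuousAt.tendsto.mono_left nhdsWithin_le_nhds
    have hcc : Tendsto c (𝓝[≠] t₀) (𝓝 (c t₀)) :=
      hc.continuousAt.tendsto.mono_left nhdsWithin_le_nhds
    have hrhs : Tendsto (fun t => a t * (Real.log |t - t₀|)⁻¹
        + c t * (Real.log |t - t₀|)⁻¹ * (Real.log |t - t₀|)⁻¹) (𝓝[≠] t₀)
        (𝓝 (a t₀ * 0 + c t₀ * 0 * 0)) := ((hca.mul hinv).add ((hcc.mul hinv).mul hinv))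
    rw [mul_zero, mul_zero, add_zero] at hrhs
    have h1 : Tendsto (fun _ : ℝ => (1:ℝ)) (𝓝[≠] t₀) (𝓝 0) := by
      refine hrhs.congr' ?_
      filter_upwards [hev, hLne] with t ht hne
      have hL0 : Real.log |t - t₀| ≠ 0 := by linarith
      have hdiv : (1:ℝ) = ((t - t₀) ^ 0 * Real.log |t - t₀| ^ 2)
          / (Real.log |t - t₀| * Real.log |t - t₀|) := by
        rw [eq_div_iff (mul_ne_zero hL0 hL0)]
        ring
      rw [hdiv, ht, add_div, eq_comm]
      congr 1
      · rw [mul_div_assoc, div_mul_cancel_left₀ hL0]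
      · rw [div_eq_mul_inv, mul_inv, ← mul_assoc]
    have := tendsto_nhds_unique h1 tendsto_const_nhds
    norm_num at this
  | succ n ih =>
    intro a c ha hc hev
    have hL : Tendsto (fun t => Real.log |t - t₀|) (𝓝[≠] t₀) atBot := tps_tendsto_log_atBot t₀
    have hLne : ∀ᶠ t in 𝓝[≠] t₀, Real.log |t - t₀| < -1 := hL.eventually (eventually_lt_atBot (-1))
    have hinv := tps_inv_log t₀
    have hcc : Tendsto c (𝓝[≠] t₀) (𝓝 (c t₀)) :=
      hc.continuousAt.tendsto.mono_left nhdsWithin_le_nhds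
    -- show a t₀ = 0
    have ha0 : a t₀ = 0 := by
      have h1 := tps_main_lim t₀ 1 (n+1) (by omega)
      have h2 := hcc.mul hinv
      rw [mul_zero] at h2
      have hx := h1.sub h2
      rw [sub_zero] at hx
      have haev : Tendsto a (𝓝[≠] t₀) (𝓝 0) := by
        refine hx.congr' ?_
        filter_upwards [hev, hLne] with t ht hne
        have hL0 : Real.log |t - t₀| ≠ 0 := by linarith
        have hdiv : a t = ((t - t₀) ^ (n + 1) * Real.log |t - t₀| ^ 2 - c t)
            / Real.log |t - t₀| := by
          rw [eq_div_iff hL0]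
          linear_combination -ht
        have hsplit : ((t - t₀) ^ (n + 1) * Real.log |t - t₀| ^ 2 - c t) / Real.log |t - t₀|
            = (t - t₀) ^ (n + 1) * Real.log |t - t₀| ^ 1 - c t * (Real.log |t - t₀|)⁻¹ := by
          rw [sub_div, mul_div_assoc, div_eq_mul_inv (c t)]
          congr 2
          rw [pow_one, sq, mul_div_cancel_right₀ _ hL0]
        rw [hdiv, hsplit]
      have ha' : Tendsto a (𝓝[≠] t₀) (𝓝 (a t₀)) :=
        ha.continuousAt.tendsto.mono_left nhdsWithin_le_nhds
      exact tendsto_nhds_unique ha' haev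
    obtain ⟨a₁, ha₁, haeq⟩ := tps_factor_out ha ha0
    have ha₁c : Tendsto a₁ (𝓝[≠] t₀) (𝓝 (a₁ t₀)) :=
      ha₁.continuousAt.tendsto.mono_left nhdsWithin_le_nhds
    -- show c t₀ = 0
    have hc0 : c t₀ = 0 := by
      have h1 := tps_main_lim t₀ 2 (n+1) (by omega)
      have h2 := ha₁c.mul (tps_main_lim t₀ 1 1 le_rfl)
      rw [mul_zero] at h2
      have hx := h1.sub h2
      rw [sub_zero] at hx
      have hcev : Tendsto c (𝓝[≠] t₀) (𝓝 0) := by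
        refine hx.congr' ?_
        filter_upwards [hev, haeq.filter_mono nhdsWithin_le_nhds] with t ht hat
        rw [hat] at ht
        linear_combination ht
      exact tendsto_nhds_unique hcc hcev
    obtain ⟨c₁, hc₁, hceq⟩ := tps_factor_out hc hc0
    apply ih a₁ c₁ ha₁ hc₁
    filter_upwards [hev, haeq.filter_mono nhdsWithin_le_nhds,
      hceq.filter_mono nhdsWithin_le_nhds, self_mem_nhdsWithin] with t ht hat hct htne
    have hx : t - t₀ ≠ 0 := sub_ne_zero.mpr htne
    rw [hat, hct, pow_succ'] at ht
    have hgoal : (t - t₀) * ((t - t₀) ^ n * Real.log |t - t₀| ^ 2)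
        = (t - t₀) * (a₁ t * Real.log |t - t₀| + c₁ t) := by
      linear_combination ht
    exact mul_left_cancel₀ hx hgoal

/-- Reduction lemma: peel off common powers of `(t - t₀)`. -/
lemma tps_lemA (t₀ : ℝ) (s : ℕ) (hs : 1 ≤ s) : ∀ m : ℕ, ∀ a c : ℝ → ℝ,
    AnalyticAt ℝ a t₀ → AnalyticAt ℝ c t₀ →
    (∀ᶠ t in 𝓝[≠] t₀, (t - t₀) ^ (m + s) * Real.log |t - t₀| ^ 2
      = a t * ((t - t₀) ^ m * Real.log |t - t₀|) + c t) → False := by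
  intro m
  induction m with
  | zero =>
    intro a c ha hc hev
    apply tps_lemB t₀ s a c ha hc
    filter_upwards [hev] with t ht
    rw [zero_add] at ht
    rw [ht, pow_zero, one_mul]
  | succ m ih =>
    intro a c ha hc hev
    have hac : Tendsto a (𝓝[≠] t₀) (𝓝 (a t₀)) :=
      ha.continuousAt.tendsto.mono_left nhdsWithin_le_nhds
    have hcc : Tendsto c (𝓝[≠] t₀) (𝓝 (c t₀)) :=
      hc.continuousAt.tendsto.mono_left nhdsWithin_le_nhds
    have hc0 : c t₀ = 0 := by
      have h1 := tps_main_lim t₀ 2 (m + 1 + s) (by omega)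
      have h2 := hac.mul (tps_main_lim t₀ 1 (m + 1) (by omega))
      rw [mul_zero] at h2
      have hx := h1.sub h2
      rw [sub_zero] at hx
      have hcev : Tendsto c (𝓝[≠] t₀) (𝓝 0) := by
        refine hx.congr' ?_
        filter_upwards [hev] with t ht
        linear_combination ht
      exact tendsto_nhds_unique hcc hcev
    obtain ⟨c₁, hc₁, hceq⟩ := tps_factor_out hc hc0
    apply ih a c₁ ha hc₁
    filter_upwards [hev, hceq.filter_mono nhdsWithin_le_nhds, self_mem_nhdsWithin]
      with t ht hct htne
    have hx : t - t₀ ≠ 0 := sub_ne_zero.mpr htne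
    rw [hct] at ht
    have h1 : (t - t₀) ^ (m + 1 + s) = (t - t₀) * (t - t₀) ^ (m + s) := by
      rw [show m + 1 + s = (m + s) + 1 by omega, pow_succ']
    have h2 : (t - t₀) ^ (m + 1) = (t - t₀) * (t - t₀) ^ m := pow_succ' _ _
    rw [h1, h2] at ht
    have hgoal : (t - t₀) * ((t - t₀) ^ (m + s) * Real.log |t - t₀| ^ 2)
        = (t - t₀) * (a t * ((t - t₀) ^ m * Real.log |t - t₀|) + c₁ t) := by
      linear_combination ht
    exact mul_left_cancel₀ hx hgoal

theorem tps_no_quadratic_identity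
    (k : ℕ) (hk : 1 ≤ k) (t₀ : ℝ)
    (g α β : ℝ → ℝ)
    (hg : ∀ t, g t = (t - t₀) ^ (2 * k) * Real.log |t - t₀|)
    (hα : AnalyticAt ℝ α t₀) (hβ : AnalyticAt ℝ β t₀)
    (hid : ∀ᶠ t in nhds t₀, g t ^ 2 = α t * g t + β t) :
    False := by
  apply tps_lemA t₀ (2 * k) (by omega) (2 * k) α β hα hβ
  filter_upwards [hid.filter_mono nhdsWithin_le_nhds] with t ht
  rw [hg t] at ht
  rw [← ht, pow_add]
  ring
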